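/- Let H be a Hopf algebra, L ⊆ H a Hopf subalgebra, (ρ, V) and (σ, Σ) representations of H and L respectively, and {X_i}_{i=1}^m, {X^i}_{i=1}^m dual bases (⟨X_i,X^j⟩ = δ_ij for an ad-invariant nondegenerate pairing as above) of ad(L)-invariant subspaces u₋, u₊ of H. Let γ : u₊ → End(Σ) be L-equivariant: γ(ad(Y)X) = σ(Y₍₁₎) γ(X) σ(S(Y₍₂₎)) for Y ∈ L. Then for every linear map A : V → Σ intertwining the L-actions twisted by the antipode (A ∘ ρ(S(Y)) = σ(S(Y)) ∘ A for all Y ∈ L), the map D₋(A) := -Σ_i γ(X^i) ∘ A ∘ ρ(X_i) again satisfies D₋(A) ∘ ρ(S(Y)) = σ(S(Y)) ∘ D₋(A) for all Y ∈ L. -/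

import Mathlib

open TensorProduct Coalgebra HopfAlgebra

/-- The adjoint action of a Hopf algebra on itself:
`ad X Y = X₍₁₎ * Y * S(X₍₂₎)` in Sweedler notation. -/
noncomputable def ad (k : Type*) {H : Type*} [CommSemiring k] [Semiring H]
    [HopfAlgebra k H] (X Y : H) : H :=
  LinearMap.mul' k H
    ((TensorProduct.map LinearMap.id
      ((LinearMap.mulLeft k Y).comp (antipode (R := k)))) (comul X))

section Helpers
variable {k H : Type*} [CommSemiring k] [Semiring H] [HopfAlgebra k H]

lemma sum_counit_smul {a : H} {ι : Type*} (r : Coalgebra.Repr k a ι) :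
    ∑ i ∈ r.index, counit (R := k) (r.left i) • r.right i = a := by
  have h := congrArg (TensorProduct.lid k H) (Coalgebra.sum_counit_tmul_eq (R := k) r)
  rw [map_sum] at h
  simp only [TensorProduct.lid_tmul] at h
  simpa using h

lemma sum_smul_counit {a : H} {ι : Type*} (r : Coalgebra.Repr k a ι) :
    ∑ i ∈ r.index, counit (R := k) (r.right i) • r.left i = a := by
  have h := congrArg (TensorProduct.rid k H) (Coalgebra.sum_tmul_counit_eq (R := k) r)
  rw [map_sum] at h
  simp only [TensorProduct.rid_tmul] at h
  simpa using h

/-- Build a `Coalgebra.Repr` from an explicit finite-sum presentation of `comul a`. -/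
def mkRepr {n : ℕ} {a : H} (f g : Fin n → H)
    (h : (comul (R := k) a : H ⊗[k] H) = ∑ i, f i ⊗ₜ[k] g i) : Coalgebra.Repr k a (Fin n) where
  index := Finset.univ
  left := f
  right := g
  eq := h.symm

end Helpers

section Conv
variable {k H B : Type*} [CommSemiring k] [Semiring H] [HopfAlgebra k H]
  [Semiring B] [Algebra k B]

/-- Convolution product on `H →ₗ[k] B`. -/
noncomputable def conv (f g : H →ₗ[k] B) : H →ₗ[k] B :=
  (LinearMap.mul' k B) ∘ₗ (TensorProduct.map f g) ∘ₗ (comul (R := k))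

/-- Convolution unit. -/
noncomputable def convUnit : H →ₗ[k] B :=
  (Algebra.linearMap k B) ∘ₗ (counit (R := k))

lemma conv_apply (f g : H →ₗ[k] B) (a : H) :
    conv f g a = LinearMap.mul' k B (TensorProduct.map f g (comul (R := k) a)) := rfl

lemma conv_apply_repr (f g : H →ₗ[k] B) {a : H} {ι : Type*} (r : Coalgebra.Repr k a ι) :
    conv f g a = ∑ i ∈ r.index, f (r.left i) * g (r.right i) := by
  rw [conv_apply, ← r.eq]
  simp [map_sum]

lemma conv_assoc (f g h : H →ₗ[k] B) : conv (conv f g) h = conv f (conv g h) := by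
  have e1 : (LinearMap.mul' k B) ∘ₗ (TensorProduct.map (conv f g) h)
      = ((LinearMap.mul' k B)
          ∘ₗ TensorProduct.map ((LinearMap.mul' k B) ∘ₗ TensorProduct.map f g) h)
        ∘ₗ (comul (R := k)).rTensor H := by
    apply TensorProduct.ext'
    intro x y
    simp [conv_apply]
  have e2 : (LinearMap.mul' k B) ∘ₗ (TensorProduct.map f (conv g h))
      = ((LinearMap.mul' k B)
          ∘ₗ TensorProduct.map f ((LinearMap.mul' k B) ∘ₗ TensorProduct.map g h))
        ∘ₗ (comul (R := k)).lTensor H := by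
    apply TensorProduct.ext'
    intro x y
    simp [conv_apply]
  have key : ((LinearMap.mul' k B)
          ∘ₗ TensorProduct.map ((LinearMap.mul' k B) ∘ₗ TensorProduct.map f g) h)
      = ((LinearMap.mul' k B)
          ∘ₗ TensorProduct.map f ((LinearMap.mul' k B) ∘ₗ TensorProduct.map g h))
        ∘ₗ (TensorProduct.assoc k H H H).toLinearMap := by
    apply TensorProduct.ext_threefold
    intro x y z
    simp [mul_assoc]
  ext a
  have h1 := LinearMap.congr_fun e1 (comul (R := k) a)
  have h2 := LinearMap.congr_fun e2 (comul (R := k) a)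
  have h3 := LinearMap.congr_fun key ((comul (R := k)).rTensor H (comul (R := k) a))
  simp only [LinearMap.comp_apply] at h1 h2 h3
  rw [conv_apply, h1, h3, conv_apply, h2]
  simp only [LinearEquiv.coe_coe]
  rw [Coalgebra.coassoc_apply (R := k) a]

lemma conv_unit_left (f : H →ₗ[k] B) : conv (convUnit (k := k) (H := H) (B := B)) f = f := by
  ext a
  rw [conv_apply_repr _ _ (ℛ k a)]
  simp only [convUnit, LinearMap.comp_apply, Algebra.linearMap_apply, ← Algebra.smul_def]
  simp_rw [← map_smul f, ← map_sum, _root_.sum_counit_smul]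

lemma conv_unit_right (f : H →ₗ[k] B) : conv f (convUnit (k := k) (H := H) (B := B)) = f := by
  ext a
  rw [conv_apply_repr _ _ (ℛ k a)]
  simp only [convUnit, LinearMap.comp_apply, Algebra.linearMap_apply]
  have : ∀ i ∈ (ℛ k a).index, f ((ℛ k a).left i) * algebraMap k B (counit (R := k) ((ℛ k a).right i))
      = counit (R := k) ((ℛ k a).right i) • f ((ℛ k a).left i) := by
    intro i _
    rw [← Algebra.commutes, ← Algebra.smul_def]
  rw [Finset.sum_congr rfl this]
  simp_rw [← map_smul f, ← map_sum, sum_smul_counit]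

lemma conv_unique (f g h : H →ₗ[k] B) (hfg : conv f g = convUnit)
    (hhf : conv h f = convUnit) : h = g := by
  have : conv h (conv f g) = conv h convUnit := by rw [hfg]
  rw [conv_unit_right, ← conv_assoc, hhf, conv_unit_left] at this
  exact this.symm


noncomputable def antipodeFlip : H →ₗ[k] H ⊗[k] H :=
  (TensorProduct.comm k H H).toLinearMap ∘ₗ
    TensorProduct.map (antipode (R := k)) (antipode (R := k)) ∘ₗ comul

lemma antipodeFlip_repr {a : H} {ι : Type*} (r : Coalgebra.Repr k a ι) :
    antipodeFlip (k := k) a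
      = ∑ i ∈ r.index, antipode (R := k) (r.right i) ⊗ₜ[k] antipode (R := k) (r.left i) := by
  simp [antipodeFlip, ← r.eq, map_sum]

lemma conv_comul_antipodeFlip :
    conv (comul (R := k) (A := H)) (antipodeFlip (k := k) (H := H)) = convUnit := by
  ext a
  set r := ℛ k a with hrdef
  set rV : (i : H × H) → Coalgebra.Repr k (r.right i) (H × H) := fun i => ℛ k (r.right i) with hrV
  set rVL : (i : H × H) → (q : H × H) → Coalgebra.Repr k ((rV i).left q) (H × H) :=
    fun i q => ℛ k ((rV i).left q) with hrVL
  set rVR : (i : H × H) → (q : H × H) → Coalgebra.Repr k ((rV i).right q) (H × H) :=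
    fun i q => ℛ k ((rV i).right q) with hrVR
  -- Θ (u ⊗ c) = u * antipodeFlip c
  set Θ : (H ⊗[k] H) ⊗[k] H →ₗ[k] H ⊗[k] H :=
    (LinearMap.mul' k (H ⊗[k] H)) ∘ₗ
      TensorProduct.map LinearMap.id (antipodeFlip (k := k)) with hΘ
  have factor : (LinearMap.mul' k (H ⊗[k] H)) ∘ₗ
      TensorProduct.map (comul (R := k)) (antipodeFlip (k := k))
      = Θ ∘ₗ (comul (R := k)).rTensor H := by
    apply TensorProduct.ext'
    intro x y
    simp [hΘ]
  have step1 : conv (comul (R := k) (A := H)) (antipodeFlip (k := k) (H := H)) a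
      = Θ ((comul (R := k)).rTensor H (comul (R := k) a)) := by
    have h := LinearMap.congr_fun factor (comul (R := k) a)
    simp only [LinearMap.comp_apply] at h
    rw [conv_apply]
    exact h
  have step2 : (comul (R := k)).rTensor H (comul (R := k) a)
      = ∑ i ∈ r.index, ∑ q ∈ (rV i).index,
          (r.left i ⊗ₜ[k] (rV i).left q) ⊗ₜ[k] (rV i).right q := by
    rw [← Coalgebra.coassoc_symm_apply (R := k)]
    rw [← r.eq]
    rw [map_sum, map_sum]
    refine Finset.sum_congr rfl fun i _ => ?_
    rw [LinearMap.lTensor_tmul, ← (rV i).eq, tmul_sum, map_sum]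
    refine Finset.sum_congr rfl fun q _ => ?_
    simp
  have step3 : conv (comul (R := k) (A := H)) (antipodeFlip (k := k) (H := H)) a
      = ∑ i ∈ r.index, ∑ q ∈ (rV i).index, ∑ m ∈ (rVR i q).index,
          (r.left i * antipode (R := k) ((rVR i q).right m)) ⊗ₜ[k]
            ((rV i).left q * antipode (R := k) ((rVR i q).left m)) := by
    rw [step1, step2, map_sum]
    refine Finset.sum_congr rfl fun i _ => ?_
    rw [map_sum]
    refine Finset.sum_congr rfl fun q _ => ?_
    simp only [hΘ, LinearMap.comp_apply, map_tmul, LinearMap.id_coe, id_eq,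
      LinearMap.mul'_apply, antipodeFlip_repr (rVR i q)]
    simp [Finset.mul_sum, Algebra.TensorProduct.tmul_mul_tmul]
  have key : ∀ i ∈ r.index, ∑ q ∈ (rV i).index, ∑ m ∈ (rVR i q).index,
      (r.left i * antipode (R := k) ((rVR i q).right m)) ⊗ₜ[k]
        ((rV i).left q * antipode (R := k) ((rVR i q).left m))
      = (r.left i * antipode (R := k) (r.right i)) ⊗ₜ[k] (1 : H) := by
    intro i _
    set Ξ : H ⊗[k] (H ⊗[k] H) →ₗ[k] H ⊗[k] H :=
      (TensorProduct.map ((LinearMap.mulLeft k (r.left i)) ∘ₗ antipode (R := k))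
          ((LinearMap.mul' k H) ∘ₗ TensorProduct.map LinearMap.id (antipode (R := k)))) ∘ₗ
        ((TensorProduct.comm k (H ⊗[k] H) H).toLinearMap ∘ₗ
          (TensorProduct.assoc k H H H).symm.toLinearMap) with hΞ
    have hΞapp : ∀ c d e : H, Ξ (c ⊗ₜ[k] (d ⊗ₜ[k] e))
        = (r.left i * antipode (R := k) e) ⊗ₜ[k] (c * antipode (R := k) d) := by
      intro c d e; simp [hΞ]
    have hco := Coalgebra.sum_tmul_tmul_eq (R := k) (rV i) (rVL i) (rVR i)
    have hIm := congrArg Ξ hco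
    simp only [map_sum] at hIm
    simp only [hΞapp] at hIm
    rw [← hIm]
    have inner : ∀ q ∈ (rV i).index, ∑ m ∈ (rVL i q).index,
        (r.left i * antipode (R := k) ((rV i).right q)) ⊗ₜ[k]
          ((rVL i q).left m * antipode (R := k) ((rVL i q).right m))
        = (r.left i * antipode (R := k) (counit (R := k) ((rV i).left q) • (rV i).right q))
            ⊗ₜ[k] (1 : H) := by
      intro q _
      rw [← tmul_sum, sum_mul_antipode_eq_smul (rVL i q), tmul_smul]
      rw [map_smul, mul_smul_comm, smul_tmul']
    rw [Finset.sum_congr rfl inner]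
    rw [← sum_tmul]
    congr 1
    rw [← Finset.mul_sum, ← map_sum, _root_.sum_counit_smul (rV i)]
  rw [step3, Finset.sum_congr rfl key, ← sum_tmul, sum_mul_antipode_eq_algebraMap_counit r]
  simp [convUnit, Algebra.TensorProduct.algebraMap_apply]


lemma conv_comulAntipode_comul :
    conv ((comul (R := k) (A := H)) ∘ₗ antipode (R := k)) (comul (R := k)) = convUnit := by
  ext a
  rw [conv_apply_repr _ _ (ℛ k a)]
  simp only [LinearMap.comp_apply]
  calc ∑ i ∈ (ℛ k a).index,
        comul (R := k) (antipode (R := k) ((ℛ k a).left i)) * comul (R := k) ((ℛ k a).right i)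
      = comul (R := k)
          (∑ i ∈ (ℛ k a).index, antipode (R := k) ((ℛ k a).left i) * (ℛ k a).right i) := by
        rw [map_sum]
        exact Finset.sum_congr rfl fun i _ => (Bialgebra.comul_mul _ _).symm
    _ = convUnit a := by
        rw [sum_antipode_mul_eq_algebraMap_counit (ℛ k a)]
        simp [convUnit]


lemma comul_antipode' (a : H) :
    (comul (R := k) (antipode (R := k) a) : H ⊗[k] H) = antipodeFlip (k := k) a := by
  have h := conv_unique (B := H ⊗[k] H) (comul (R := k) (A := H)) (antipodeFlip (k := k) (H := H))
    ((comul (R := k) (A := H)) ∘ₗ antipode (R := k))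
    conv_comul_antipodeFlip conv_comulAntipode_comul
  exact LinearMap.congr_fun h a

end Conv

section L2
variable {k H : Type*} [CommSemiring k] [Semiring H] [HopfAlgebra k H]

/-- `∑ S(x₁y₁)(x₂y₂) = ε(x)ε(y) • 1`. -/
lemma sum_antipode_mul_mul (x y : H) {ι κ : Type*} (rx : Coalgebra.Repr k x ι) (ry : Coalgebra.Repr k y κ) :
    ∑ p ∈ rx.index, ∑ s ∈ ry.index,
      antipode (R := k) (rx.left p * ry.left s) * (rx.right p * ry.right s)
      = (counit (R := k) x * counit (R := k) y) • (1 : H) := by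
  have heq : ∑ z ∈ rx.index ×ˢ ry.index,
      (rx.left z.1 * ry.left z.2) ⊗ₜ[k] (rx.right z.1 * ry.right z.2)
      = comul (R := k) (x * y) := by
    rw [Bialgebra.comul_mul, ← rx.eq, ← ry.eq, Finset.sum_mul_sum]
    rw [Finset.sum_product]
    exact Finset.sum_congr rfl fun p _ => Finset.sum_congr rfl fun s _ => by
      rw [Algebra.TensorProduct.tmul_mul_tmul]
  have h := sum_antipode_mul_eq_smul (R := k)
    (⟨rx.index ×ˢ ry.index, fun z => rx.left z.1 * ry.left z.2,
      fun z => rx.right z.1 * ry.right z.2, heq⟩ : Coalgebra.Repr k (x * y) _)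
  rw [Finset.sum_product] at h
  simpa [Bialgebra.counit_mul] using h

lemma antipode_expand {c : H} {ι : Type*} (r : Coalgebra.Repr k c ι) :
    antipode (R := k) c = ∑ i ∈ r.index, counit (R := k) (r.left i) • antipode (R := k) (r.right i) := by
  conv_lhs => rw [← _root_.sum_counit_smul r]
  rw [map_sum]
  exact Finset.sum_congr rfl fun i _ => by rw [map_smul]

lemma antipode_mul' (a b : H) :
    antipode (R := k) (a * b) = antipode (R := k) b * antipode (R := k) a := by
  set ra := ℛ k a with hra
  set rb := ℛ k b with hrb
  set rA1 : (i : H × H) → Coalgebra.Repr k (ra.left i) (H × H) := fun i => ℛ k (ra.left i) with hrA1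
  set rA2 : (i : H × H) → Coalgebra.Repr k (ra.right i) (H × H) := fun i => ℛ k (ra.right i) with hrA2
  set rB1 : (j : H × H) → Coalgebra.Repr k (rb.left j) (H × H) := fun j => ℛ k (rb.left j) with hrB1
  set rB2 : (j : H × H) → Coalgebra.Repr k (rb.right j) (H × H) := fun j => ℛ k (rb.right j) with hrB2
  -- Step 1
  have step1 : antipode (R := k) b * antipode (R := k) a
      = ∑ i ∈ ra.index, ∑ j ∈ rb.index,
          (counit (R := k) (ra.left i) * counit (R := k) (rb.left j)) •
            (antipode (R := k) (rb.right j) * antipode (R := k) (ra.right i)) := by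
    rw [antipode_expand ra, antipode_expand rb, Finset.sum_mul_sum, Finset.sum_comm]
    refine Finset.sum_congr rfl fun i _ => Finset.sum_congr rfl fun j _ => ?_
    rw [smul_mul_assoc, mul_smul_comm, smul_smul, mul_comm]
  -- Step 2
  have step2 : ∀ i ∈ ra.index, ∀ j ∈ rb.index,
      (counit (R := k) (ra.left i) * counit (R := k) (rb.left j)) •
        (antipode (R := k) (rb.right j) * antipode (R := k) (ra.right i))
      = ∑ p ∈ (rA1 i).index, ∑ s ∈ (rB1 j).index,
          antipode (R := k) ((rA1 i).left p * (rB1 j).left s) *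
            ((rA1 i).right p * ((rB1 j).right s *
              (antipode (R := k) (rb.right j) * antipode (R := k) (ra.right i)))) := by
    intro i _ j _
    have h := sum_antipode_mul_mul (k := k) (ra.left i) (rb.left j) (rA1 i) (rB1 j)
    have h2 := congrArg (fun z => z * (antipode (R := k) (rb.right j) * antipode (R := k) (ra.right i))) h
    simp only [Finset.sum_mul, smul_mul_assoc, one_mul] at h2
    simp only [mul_assoc] at h2
    rw [← h2]
  -- Step 3: collapse the `b`-legs
  have claim3 : ∀ i ∈ ra.index, ∀ p ∈ (rA1 i).index,
      ∑ j ∈ rb.index, ∑ s ∈ (rB1 j).index,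
        antipode (R := k) ((rA1 i).left p * (rB1 j).left s) *
          ((rA1 i).right p * ((rB1 j).right s *
            (antipode (R := k) (rb.right j) * antipode (R := k) (ra.right i))))
      = antipode (R := k) ((rA1 i).left p * b) *
          ((rA1 i).right p * antipode (R := k) (ra.right i)) := by
    intro i _ p _
    set c1 := (rA1 i).left p with hc1
    set c2 := (rA1 i).right p with hc2
    set w := antipode (R := k) (ra.right i) with hw
    set Ξ : H ⊗[k] (H ⊗[k] H) →ₗ[k] H :=
      (LinearMap.mul' k H) ∘ₗ TensorProduct.map
        ((antipode (R := k)) ∘ₗ (LinearMap.mulLeft k c1))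
        ((LinearMap.mul' k H) ∘ₗ TensorProduct.map (LinearMap.mulLeft k c2)
          ((LinearMap.mulRight k w) ∘ₗ (antipode (R := k)))) with hΞ
    have hΞapp : ∀ u v t : H, Ξ (u ⊗ₜ[k] (v ⊗ₜ[k] t))
        = antipode (R := k) (c1 * u) * (c2 * (v * (antipode (R := k) t * w))) := by
      intro u v t; simp [hΞ, mul_assoc]
    have hco := Coalgebra.sum_tmul_tmul_eq (R := k) rb rB1 rB2
    have hIm := congrArg Ξ hco
    simp only [map_sum, hΞapp] at hIm
    rw [hIm]
    have inner : ∀ j ∈ rb.index, ∑ u ∈ (rB2 j).index,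
        antipode (R := k) (c1 * rb.left j) *
          (c2 * ((rB2 j).left u * (antipode (R := k) ((rB2 j).right u) * w)))
        = antipode (R := k) (c1 * (counit (R := k) (rb.right j) • rb.left j)) * (c2 * w) := by
      intro j _
      have h := sum_mul_antipode_eq_smul (R := k) (rB2 j)
      calc ∑ u ∈ (rB2 j).index,
            antipode (R := k) (c1 * rb.left j) *
              (c2 * ((rB2 j).left u * (antipode (R := k) ((rB2 j).right u) * w)))
          = antipode (R := k) (c1 * rb.left j) *
              (c2 * ((∑ u ∈ (rB2 j).index,
                (rB2 j).left u * antipode (R := k) ((rB2 j).right u)) * w)) := by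
            rw [Finset.sum_mul, Finset.mul_sum, Finset.mul_sum]
            exact Finset.sum_congr rfl fun u _ => by rw [mul_assoc]
        _ = antipode (R := k) (c1 * (counit (R := k) (rb.right j) • rb.left j)) * (c2 * w) := by
            rw [h, smul_mul_assoc, one_mul, mul_smul_comm, mul_smul_comm,
              ← smul_mul_assoc, ← map_smul, ← mul_smul_comm]
    rw [Finset.sum_congr rfl inner]
    calc ∑ j ∈ rb.index,
          antipode (R := k) (c1 * (counit (R := k) (rb.right j) • rb.left j)) * (c2 * w)
        = antipode (R := k) (c1 * ∑ j ∈ rb.index, counit (R := k) (rb.right j) • rb.left j) * (c2 * w) := by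
          rw [← Finset.sum_mul, ← map_sum, ← Finset.mul_sum]
      _ = antipode (R := k) (c1 * b) * (c2 * w) := by rw [sum_smul_counit rb]
  -- Step 4: collapse the `a`-legs
  have claim4 : ∑ i ∈ ra.index, ∑ p ∈ (rA1 i).index,
      antipode (R := k) ((rA1 i).left p * b) *
        ((rA1 i).right p * antipode (R := k) (ra.right i))
      = antipode (R := k) (a * b) := by
    set Ξ : H ⊗[k] (H ⊗[k] H) →ₗ[k] H :=
      (LinearMap.mul' k H) ∘ₗ TensorProduct.map
        ((antipode (R := k)) ∘ₗ (LinearMap.mulRight k b))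
        ((LinearMap.mul' k H) ∘ₗ TensorProduct.map LinearMap.id (antipode (R := k))) with hΞ
    have hΞapp : ∀ u v t : H, Ξ (u ⊗ₜ[k] (v ⊗ₜ[k] t))
        = antipode (R := k) (u * b) * (v * antipode (R := k) t) := by
      intro u v t; simp [hΞ]
    have hco := Coalgebra.sum_tmul_tmul_eq (R := k) ra rA1 rA2
    have hIm := congrArg Ξ hco
    simp only [map_sum, hΞapp] at hIm
    rw [hIm]
    have inner : ∀ i ∈ ra.index, ∑ u ∈ (rA2 i).index,
        antipode (R := k) (ra.left i * b) *
          ((rA2 i).left u * antipode (R := k) ((rA2 i).right u))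
        = antipode (R := k) ((counit (R := k) (ra.right i) • ra.left i) * b) := by
      intro i _
      rw [← Finset.mul_sum, sum_mul_antipode_eq_smul (rA2 i), mul_smul_comm, mul_one, ← map_smul, ← smul_mul_assoc]
    rw [Finset.sum_congr rfl inner, ← map_sum, ← Finset.sum_mul, sum_smul_counit ra]
  -- assemble
  calc antipode (R := k) (a * b)
      = ∑ i ∈ ra.index, ∑ p ∈ (rA1 i).index,
          antipode (R := k) ((rA1 i).left p * b) *
            ((rA1 i).right p * antipode (R := k) (ra.right i)) := claim4.symm
    _ = ∑ i ∈ ra.index, ∑ p ∈ (rA1 i).index, ∑ j ∈ rb.index, ∑ s ∈ (rB1 j).index,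
          antipode (R := k) ((rA1 i).left p * (rB1 j).left s) *
            ((rA1 i).right p * ((rB1 j).right s *
              (antipode (R := k) (rb.right j) * antipode (R := k) (ra.right i)))) := by
        exact Finset.sum_congr rfl fun i hi => Finset.sum_congr rfl fun p hp =>
          (claim3 i hi p hp).symm
    _ = ∑ i ∈ ra.index, ∑ j ∈ rb.index, ∑ p ∈ (rA1 i).index, ∑ s ∈ (rB1 j).index,
          antipode (R := k) ((rA1 i).left p * (rB1 j).left s) *
            ((rA1 i).right p * ((rB1 j).right s *
              (antipode (R := k) (rb.right j) * antipode (R := k) (ra.right i)))) := by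
        exact Finset.sum_congr rfl fun i _ => Finset.sum_comm
    _ = ∑ i ∈ ra.index, ∑ j ∈ rb.index,
          (counit (R := k) (ra.left i) * counit (R := k) (rb.left j)) •
            (antipode (R := k) (rb.right j) * antipode (R := k) (ra.right i)) := by
        exact Finset.sum_congr rfl fun i hi => Finset.sum_congr rfl fun j hj =>
          (step2 i hi j hj).symm
    _ = antipode (R := k) b * antipode (R := k) a := step1.symm

end L2
noncomputable section StepA
variable {k : Type u1} {H : Type u2} [CommSemiring k] [Semiring H] [HopfAlgebra k H]

lemma antipode_one' : antipode (R := k) (1 : H) = 1 := by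
  have h := mul_antipode_rTensor_comul_apply (R := k) (a := (1 : H))
  rw [Bialgebra.comul_one, Algebra.TensorProduct.one_def] at h
  simpa using h

lemma ad_repr (x : H) {Z : H} {ι : Type*} (r : Coalgebra.Repr k Z ι) :
    ad k Z x = ∑ s ∈ r.index, r.left s * (x * antipode (R := k) (r.right s)) := by
  rw [ad, ← r.eq]
  simp [map_sum, mul_assoc]

lemma sum_counit_smul_of_eq {n : ℕ} {Y : H} {y1 y2 : Fin n → H}
    (hY : (comul (R := k) Y : H ⊗[k] H) = ∑ t, y1 t ⊗ₜ[k] y2 t) :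
    ∑ t, counit (R := k) (y1 t) • y2 t = Y := by
  simpa using _root_.sum_counit_smul (⟨(Finset.univ : Finset (Fin n)), y1, y2, hY.symm⟩ :
    Coalgebra.Repr k Y (Fin n))

lemma mul_antipode_eq_sum {n : ℕ} {Y : H} {y1 y2 : Fin n → H}
    (hY : (comul (R := k) Y : H ⊗[k] H) = ∑ t, y1 t ⊗ₜ[k] y2 t) (x : H) :
    x * antipode (R := k) Y = ∑ t, antipode (R := k) (y1 t) * ad k (y2 t) x := by
  set rW : (t : Fin n) → Coalgebra.Repr k (y2 t) (H × H) := fun t => ℛ k (y2 t) with hrW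
  set rU : (t : Fin n) → Coalgebra.Repr k (y1 t) (H × H) := fun t => ℛ k (y1 t) with hrU
  set Ξ : H ⊗[k] (H ⊗[k] H) →ₗ[k] H :=
    (LinearMap.mul' k H) ∘ₗ TensorProduct.map (antipode (R := k))
      ((LinearMap.mul' k H) ∘ₗ TensorProduct.map LinearMap.id
        ((LinearMap.mulLeft k x) ∘ₗ antipode (R := k))) with hΞ
  have hΞapp : ∀ a b c : H, Ξ (a ⊗ₜ[k] (b ⊗ₜ[k] c))
      = antipode (R := k) a * (b * (x * antipode (R := k) c)) := by
    intro a b c; simp [hΞ]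
  have hL : Ξ ((comul (R := k)).lTensor H (comul (R := k) Y))
      = ∑ t, antipode (R := k) (y1 t) * ad k (y2 t) x := by
    rw [hY, map_sum, map_sum]
    refine Finset.sum_congr rfl fun t _ => ?_
    rw [LinearMap.lTensor_tmul, ← (rW t).eq, tmul_sum, map_sum]
    rw [ad_repr x (rW t), Finset.mul_sum]
    exact Finset.sum_congr rfl fun s _ => hΞapp _ _ _
  have hR : Ξ ((comul (R := k)).lTensor H (comul (R := k) Y)) = x * antipode (R := k) Y := by
    rw [← Coalgebra.coassoc_apply (R := k), hY, map_sum, map_sum, map_sum]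
    have e1 : ∀ t, Ξ ((TensorProduct.assoc k H H H)
        ((comul (R := k)).rTensor H (y1 t ⊗ₜ[k] y2 t)))
        = counit (R := k) (y1 t) • (x * antipode (R := k) (y2 t)) := by
      intro t
      rw [LinearMap.rTensor_tmul, ← (rU t).eq, sum_tmul, map_sum, map_sum]
      have : ∀ p ∈ (rU t).index, Ξ ((TensorProduct.assoc k H H H)
          (((rU t).left p ⊗ₜ[k] (rU t).right p) ⊗ₜ[k] y2 t))
          = (antipode (R := k) ((rU t).left p) * (rU t).right p) *
              (x * antipode (R := k) (y2 t)) := by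
        intro p _
        rw [TensorProduct.assoc_tmul, hΞapp, mul_assoc]
      rw [Finset.sum_congr rfl this, ← Finset.sum_mul, sum_antipode_mul_eq_smul (rU t),
        smul_mul_assoc, one_mul]
    rw [Finset.sum_congr rfl fun t _ => e1 t]
    have : ∀ t ∈ (Finset.univ : Finset (Fin n)),
        counit (R := k) (y1 t) • (x * antipode (R := k) (y2 t))
        = x * antipode (R := k) (counit (R := k) (y1 t) • y2 t) := by
      intro t _
      rw [map_smul, mul_smul_comm]
    rw [Finset.sum_congr rfl this, ← Finset.mul_sum, ← map_sum, sum_counit_smul_of_eq hY]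
  rw [← hL, hR]

lemma keyTensor {n : ℕ} {Y : H} {y1 y2 : Fin n → H}
    (hY : (comul (R := k) Y : H ⊗[k] H) = ∑ t, y1 t ⊗ₜ[k] y2 t)
    {nz : Fin n → ℕ} {z1 z2 : (t : Fin n) → Fin (nz t) → H}
    (hz : ∀ t, (comul (R := k) (antipode (R := k) (y2 t)) : H ⊗[k] H)
      = ∑ s, z1 t s ⊗ₜ[k] z2 t s) :
    ∑ t, ∑ s, z1 t s ⊗ₜ[k] (y1 t * z2 t s)
      = antipode (R := k) Y ⊗ₜ[k] (1 : H) := by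
  set rW : (t : Fin n) → Coalgebra.Repr k (y2 t) (H × H) := fun t => ℛ k (y2 t) with hrW
  set rU : (t : Fin n) → Coalgebra.Repr k (y1 t) (H × H) := fun t => ℛ k (y1 t) with hrU
  set Φ : H ⊗[k] (H ⊗[k] H) →ₗ[k] H ⊗[k] H :=
    (TensorProduct.map (antipode (R := k))
        ((LinearMap.mul' k H) ∘ₗ TensorProduct.map LinearMap.id (antipode (R := k)))) ∘ₗ
      ((TensorProduct.comm k (H ⊗[k] H) H).toLinearMap ∘ₗ
        (TensorProduct.assoc k H H H).symm.toLinearMap) with hΦ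
  have hΦapp : ∀ a b c : H, Φ (a ⊗ₜ[k] (b ⊗ₜ[k] c))
      = antipode (R := k) c ⊗ₜ[k] (a * antipode (R := k) b) := by
    intro a b c; simp [hΦ]
  have hL : Φ ((comul (R := k)).lTensor H (comul (R := k) Y))
      = ∑ t, ∑ s, z1 t s ⊗ₜ[k] (y1 t * z2 t s) := by
    rw [hY, map_sum, map_sum]
    refine Finset.sum_congr rfl fun t _ => ?_
    have expand : ∑ s, z1 t s ⊗ₜ[k] (y1 t * z2 t s)
        = (TensorProduct.map LinearMap.id (LinearMap.mulLeft k (y1 t)))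
            (comul (R := k) (antipode (R := k) (y2 t))) := by
      rw [hz t, map_sum]
      simp
    rw [expand, comul_antipode', antipodeFlip_repr (rW t), map_sum]
    rw [LinearMap.lTensor_tmul, ← (rW t).eq, tmul_sum, map_sum]
    refine Finset.sum_congr rfl fun s _ => ?_
    rw [hΦapp]
    simp
  have hR : Φ ((comul (R := k)).lTensor H (comul (R := k) Y))
      = antipode (R := k) Y ⊗ₜ[k] (1 : H) := by
    rw [← Coalgebra.coassoc_apply (R := k), hY, map_sum, map_sum, map_sum]
    have e1 : ∀ t, Φ ((TensorProduct.assoc k H H H)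
        ((comul (R := k)).rTensor H (y1 t ⊗ₜ[k] y2 t)))
        = counit (R := k) (y1 t) • (antipode (R := k) (y2 t) ⊗ₜ[k] (1 : H)) := by
      intro t
      rw [LinearMap.rTensor_tmul, ← (rU t).eq, sum_tmul, map_sum, map_sum]
      have : ∀ p ∈ (rU t).index, Φ ((TensorProduct.assoc k H H H)
          (((rU t).left p ⊗ₜ[k] (rU t).right p) ⊗ₜ[k] y2 t))
          = antipode (R := k) (y2 t) ⊗ₜ[k]
              ((rU t).left p * antipode (R := k) ((rU t).right p)) := by
        intro p _
        rw [TensorProduct.assoc_tmul, hΦapp]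
      rw [Finset.sum_congr rfl this, ← tmul_sum, sum_mul_antipode_eq_smul (rU t), tmul_smul]
    rw [Finset.sum_congr rfl fun t _ => e1 t]
    have : ∀ t ∈ (Finset.univ : Finset (Fin n)),
        counit (R := k) (y1 t) • (antipode (R := k) (y2 t) ⊗ₜ[k] (1 : H))
        = antipode (R := k) (counit (R := k) (y1 t) • y2 t) ⊗ₜ[k] (1 : H) := by
      intro t _
      rw [map_smul, smul_tmul']
    rw [Finset.sum_congr rfl this, ← sum_tmul, ← map_sum, sum_counit_smul_of_eq hY]
  rw [← hL, hR]

end StepA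

set_option maxHeartbeats 2000000 in
/-- Well-definedness of the Dirac operator component `D₋`:  if
`A : V → Σ` intertwines the `L`-actions twisted by the antipode
(`A ∘ ρ(S(Y)) = σ(S(Y)) ∘ A` for `Y ∈ L`), then so does
`D₋(A) := -∑ᵢ γ(Xⁱ) ∘ A ∘ ρ(Xᵢ)`, where `{Xᵢ}`, `{Xⁱ}` are dual bases
(w.r.t. an ad-invariant pairing) of `ad(L)`-stable subspaces `u₋`, `u₊` of the
Hopf algebra `H`, `L ⊆ H` is a Hopf subalgebra and
`γ` is `L`-equivariant (`γ(ad(Y)X) = σ(Y₍₁₎) γ(X) σ(S(Y₍₂₎))`). -/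
theorem Dminus_well_defined (k H : Type*) [Field k] [Ring H] [HopfAlgebra k H]
    (L : Subalgebra k H)
    (hLcomul : ∀ X ∈ L, ∃ (n : ℕ) (x1 x2 : Fin n → H),
      (∀ i, x1 i ∈ L ∧ x2 i ∈ L) ∧
      (comul (R := k) X : H ⊗[k] H) = ∑ i, x1 i ⊗ₜ[k] x2 i)
    (hSL : ∀ X ∈ L, antipode (R := k) X ∈ L)
    (V Sg : Type*) [AddCommGroup V] [Module k V] [AddCommGroup Sg] [Module k Sg]
    (ρ : H →ₐ[k] Module.End k V) (σ : ↥L →ₐ[k] Module.End k Sg)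
    (B : H →ₗ[k] H →ₗ[k] k)
    (hinv : ∀ Z X Y : H, B (ad k Z X) Y = B X (ad k (antipode (R := k) Z) Y))
    (m : ℕ) (X Xup : Fin m → H)
    (hdual : ∀ i j, B (X i) (Xup j) = if i = j then 1 else 0)
    (humstab : ∀ Y ∈ L, ∀ i, ad k Y (X i) ∈ Submodule.span k (Set.range X))
    (hupstab : ∀ Y ∈ L, ∀ j, ad k Y (Xup j) ∈ Submodule.span k (Set.range Xup))
    (γ : H →ₗ[k] Module.End k Sg)
    (hγ : ∀ (Y : H) (_ : Y ∈ L) (n : ℕ) (y1 y2 : Fin n → H)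
      (h1 : ∀ t, y1 t ∈ L) (h2 : ∀ t, y2 t ∈ L),
      (comul (R := k) Y : H ⊗[k] H) = ∑ t, y1 t ⊗ₜ[k] y2 t →
      ∀ j, γ (ad k Y (Xup j)) =
        ∑ t, σ ⟨y1 t, h1 t⟩ * γ (Xup j) * σ ⟨antipode (R := k) (y2 t), hSL _ (h2 t)⟩)
    (A : V →ₗ[k] Sg)
    (hA : ∀ (Y : H) (hY : Y ∈ L),
      A ∘ₗ (ρ (antipode (R := k) Y) : V →ₗ[k] V) =
        (σ ⟨antipode (R := k) Y, hSL Y hY⟩ : Sg →ₗ[k] Sg) ∘ₗ A) :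
    ∀ (Y : H) (hY : Y ∈ L),
      (-∑ i, (γ (Xup i) : Sg →ₗ[k] Sg) ∘ₗ A ∘ₗ (ρ (X i) : V →ₗ[k] V)) ∘ₗ
          (ρ (antipode (R := k) Y) : V →ₗ[k] V) =
        (σ ⟨antipode (R := k) Y, hSL Y hY⟩ : Sg →ₗ[k] Sg) ∘ₗ
          (-∑ i, (γ (Xup i) : Sg →ₗ[k] Sg) ∘ₗ A ∘ₗ (ρ (X i) : V →ₗ[k] V)) := by
  intro Y hY
  obtain ⟨n, y1, y2, hmem, hYeq⟩ := hLcomul Y hY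
  choose nz z1 z2 hzmem hzeq using fun t : Fin n =>
    hLcomul (antipode (R := k) (y2 t)) (hSL _ (hmem t).2)
  choose c hc using fun (t : Fin n) (i : Fin m) =>
    (Submodule.mem_span_range_iff_exists_fun k).mp (humstab (y2 t) (hmem t).2 i)
  choose d hd using fun (t : Fin n) (j : Fin m) =>
    (Submodule.mem_span_range_iff_exists_fun k).mp (hupstab (antipode (R := k) (y2 t)) (hSL _ (hmem t).2) j)
  have hcd : ∀ t i j, c t i j = d t j i := by
    intro t i j
    have h1 : B (ad k (y2 t) (X i)) (Xup j) = c t i j := by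
      rw [← hc t i, map_sum]
      simp only [LinearMap.sum_apply, LinearMap.map_smul, LinearMap.smul_apply, hdual,
        smul_eq_mul, mul_ite, mul_one, mul_zero]
      simp
    have h2 : B (X i) (ad k (antipode (R := k) (y2 t)) (Xup j)) = d t j i := by
      rw [← hd t j, map_sum]
      simp only [LinearMap.map_smul, smul_eq_mul, hdual]
      simp
    rw [hinv] at h1
    rw [h2] at h1
    exact h1.symm
  have hSYmem := hSL Y hY
  -- the inclusion of L and its tensor square are injective
  set ι : ↥L →ₗ[k] H := (Subalgebra.val L).toLinearMap with hι
  have hιinj : Function.Injective ι := Subtype.val_injective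
  obtain ⟨π, hπ⟩ := ι.exists_leftInverse_of_injective (LinearMap.ker_eq_bot.mpr hιinj)
  have hinj : Function.Injective (TensorProduct.map ι ι) := by
    intro u v huv
    have h2 := congrArg (TensorProduct.map π π) huv
    rwa [← LinearMap.comp_apply, ← LinearMap.comp_apply, ← TensorProduct.map_comp, hπ,
      TensorProduct.map_id, LinearMap.id_apply, LinearMap.id_apply] at h2
  -- the antipode as a map L → L
  set SL : ↥L →ₗ[k] ↥L :=
    { toFun := fun x => ⟨antipode (R := k) x.1, hSL x.1 x.2⟩
      map_add' := fun x y => Subtype.ext (by simp)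
      map_smul' := fun r x => Subtype.ext (by simp) } with hSLdef
  -- key identity in End(Sg)
  have main_j : ∀ j : Fin m,
      ∑ t, ∑ s, σ ⟨z1 t s, (hzmem t s).1⟩ * γ (Xup j) *
          σ ⟨antipode (R := k) (z2 t s), hSL _ (hzmem t s).2⟩ *
          σ ⟨antipode (R := k) (y1 t), hSL _ (hmem t).1⟩
        = σ ⟨antipode (R := k) Y, hSYmem⟩ * γ (Xup j) := by
    intro j
    have merge : ∀ (t : Fin n) (s : Fin (nz t)),
        σ ⟨antipode (R := k) (z2 t s), hSL _ (hzmem t s).2⟩ *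
          σ ⟨antipode (R := k) (y1 t), hSL _ (hmem t).1⟩
        = σ (SL ⟨y1 t * z2 t s, mul_mem (hmem t).1 (hzmem t s).2⟩) := by
      intro t s
      rw [← map_mul]
      congr 1
      exact Subtype.ext (antipode_mul' (y1 t) (z2 t s)).symm
    have hT := keyTensor (k := k) hYeq hzeq
    have hLL : (∑ t, ∑ s, (⟨z1 t s, (hzmem t s).1⟩ : L) ⊗ₜ[k]
          (⟨y1 t * z2 t s, mul_mem (hmem t).1 (hzmem t s).2⟩ : L))
        = (⟨antipode (R := k) Y, hSYmem⟩ : L) ⊗ₜ[k] (1 : L) := by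
      apply hinj
      simp only [map_sum, TensorProduct.map_tmul]
      simpa [hι] using hT
    set Ψ : ↥L ⊗[k] ↥L →ₗ[k] Module.End k Sg := TensorProduct.lift
      (LinearMap.mk₂ k (fun p q => σ p * γ (Xup j) * σ (SL q))
        (fun p p' q => by simp [map_add, add_mul])
        (fun r p q => by simp [map_smul, smul_mul_assoc])
        (fun p q q' => by simp [map_add, mul_add])
        (fun r p q => by simp [map_smul, mul_smul_comm])) with hΨ
    have happ := congrArg Ψ hLL
    simp only [map_sum, hΨ, TensorProduct.lift.tmul, LinearMap.mk₂_apply] at happ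
    have hone : σ (SL (1 : ↥L)) = 1 := by
      have : SL (1 : ↥L) = 1 := Subtype.ext (by simpa [hSLdef] using antipode_one' (k := k) (H := H))
      rw [this, map_one]
    rw [hone, mul_one] at happ
    calc ∑ t, ∑ s, σ ⟨z1 t s, (hzmem t s).1⟩ * γ (Xup j) *
          σ ⟨antipode (R := k) (z2 t s), hSL _ (hzmem t s).2⟩ *
          σ ⟨antipode (R := k) (y1 t), hSL _ (hmem t).1⟩
        = ∑ t, ∑ s, σ ⟨z1 t s, (hzmem t s).1⟩ * γ (Xup j) *
            σ (SL ⟨y1 t * z2 t s, mul_mem (hmem t).1 (hzmem t s).2⟩) := by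
          refine Finset.sum_congr rfl fun t _ => Finset.sum_congr rfl fun s _ => ?_
          rw [mul_assoc, merge t s]
      _ = σ ⟨antipode (R := k) Y, hSYmem⟩ * γ (Xup j) := happ
  -- now assemble the map-level identity
  rw [LinearMap.neg_comp, LinearMap.comp_neg, neg_inj]
  have expand : ∀ i : Fin m, (ρ (X i) : V →ₗ[k] V) ∘ₗ (ρ (antipode (R := k) Y) : V →ₗ[k] V)
      = ∑ t, (ρ (antipode (R := k) (y1 t)) : V →ₗ[k] V) ∘ₗ (ρ (ad k (y2 t) (X i)) : V →ₗ[k] V) := by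
    intro i
    have : (X i) * antipode (R := k) Y = ∑ t, antipode (R := k) (y1 t) * ad k (y2 t) (X i) :=
      mul_antipode_eq_sum hYeq (X i)
    have h2 := congrArg ρ this
    rw [map_mul, map_sum] at h2
    simp only [map_mul] at h2
    exact h2
  calc (∑ i, (γ (Xup i) : Sg →ₗ[k] Sg) ∘ₗ A ∘ₗ (ρ (X i) : V →ₗ[k] V)) ∘ₗ
        (ρ (antipode (R := k) Y) : V →ₗ[k] V)
      = ∑ i, ∑ t, ((γ (Xup i) : Sg →ₗ[k] Sg) ∘ₗ
          ((σ ⟨antipode (R := k) (y1 t), hSL _ (hmem t).1⟩ : Sg →ₗ[k] Sg) ∘ₗ A)) ∘ₗ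
          (ρ (ad k (y2 t) (X i)) : V →ₗ[k] V) := by
        have hs : (∑ i, (γ (Xup i) : Sg →ₗ[k] Sg) ∘ₗ A ∘ₗ (ρ (X i) : V →ₗ[k] V)) ∘ₗ
            (ρ (antipode (R := k) Y) : V →ₗ[k] V)
            = ∑ i, ((γ (Xup i) : Sg →ₗ[k] Sg) ∘ₗ A ∘ₗ (ρ (X i) : V →ₗ[k] V)) ∘ₗ
              (ρ (antipode (R := k) Y) : V →ₗ[k] V) := by
          ext v; simp
        rw [hs]
        refine Finset.sum_congr rfl fun i _ => ?_
        have e1 : (γ (Xup i) : Sg →ₗ[k] Sg) ∘ₗ (A ∘ₗ (ρ (X i) : V →ₗ[k] V)) ∘ₗ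
            (ρ (antipode (R := k) Y) : V →ₗ[k] V)
            = (γ (Xup i) : Sg →ₗ[k] Sg) ∘ₗ A ∘ₗ
              ((ρ (X i) : V →ₗ[k] V) ∘ₗ (ρ (antipode (R := k) Y) : V →ₗ[k] V)) := by
          ext v; simp
        rw [LinearMap.comp_assoc, e1, expand i]
        ext v
        simp only [LinearMap.comp_apply, LinearMap.sum_apply, map_sum, LinearMap.coe_sum,
          Finset.sum_apply]
        refine Finset.sum_congr rfl fun t _ => ?_
        have := hA (y1 t) (hmem t).1
        have hv := LinearMap.congr_fun this ((ρ (ad k (y2 t) (X i)) : V →ₗ[k] V) v)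
        simp only [LinearMap.comp_apply] at hv
        rw [hv]
      _ = ∑ t, ∑ j, ((γ (ad k (antipode (R := k) (y2 t)) (Xup j)) : Sg →ₗ[k] Sg) ∘ₗ
          ((σ ⟨antipode (R := k) (y1 t), hSL _ (hmem t).1⟩ : Sg →ₗ[k] Sg) ∘ₗ A)) ∘ₗ
          (ρ (X j) : V →ₗ[k] V) := by
        rw [Finset.sum_comm]
        refine Finset.sum_congr rfl fun t _ => ?_
        -- dual-basis swap at fixed t
        calc ∑ i, ((γ (Xup i) : Sg →ₗ[k] Sg) ∘ₗ
              ((σ ⟨antipode (R := k) (y1 t), hSL _ (hmem t).1⟩ : Sg →ₗ[k] Sg) ∘ₗ A)) ∘ₗ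
              (ρ (ad k (y2 t) (X i)) : V →ₗ[k] V)
            = ∑ i, ∑ j, c t i j • (((γ (Xup i) : Sg →ₗ[k] Sg) ∘ₗ
                ((σ ⟨antipode (R := k) (y1 t), hSL _ (hmem t).1⟩ : Sg →ₗ[k] Sg) ∘ₗ A)) ∘ₗ
                (ρ (X j) : V →ₗ[k] V)) := by
              refine Finset.sum_congr rfl fun i _ => ?_
              rw [← hc t i]
              rw [map_sum]
              ext v
              simp [LinearMap.map_smul]
          _ = ∑ j, ∑ i, d t j i • (((γ (Xup i) : Sg →ₗ[k] Sg) ∘ₗ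
                ((σ ⟨antipode (R := k) (y1 t), hSL _ (hmem t).1⟩ : Sg →ₗ[k] Sg) ∘ₗ A)) ∘ₗ
                (ρ (X j) : V →ₗ[k] V)) := by
              rw [Finset.sum_comm]
              exact Finset.sum_congr rfl fun j _ => Finset.sum_congr rfl fun i _ => by
                rw [hcd t i j]
          _ = ∑ j, ((γ (ad k (antipode (R := k) (y2 t)) (Xup j)) : Sg →ₗ[k] Sg) ∘ₗ
                ((σ ⟨antipode (R := k) (y1 t), hSL _ (hmem t).1⟩ : Sg →ₗ[k] Sg) ∘ₗ A)) ∘ₗ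
                (ρ (X j) : V →ₗ[k] V) := by
              refine Finset.sum_congr rfl fun j _ => ?_
              rw [← hd t j]
              rw [map_sum]
              ext v
              simp [LinearMap.map_smul]
      _ = ∑ j, ((σ ⟨antipode (R := k) Y, hSYmem⟩ * γ (Xup j) : Module.End k Sg) : Sg →ₗ[k] Sg) ∘ₗ
            (A ∘ₗ (ρ (X j) : V →ₗ[k] V)) := by
        rw [Finset.sum_comm]
        refine Finset.sum_congr rfl fun j _ => ?_
        rw [← main_j j]
        have hγt : ∀ t, γ (ad k (antipode (R := k) (y2 t)) (Xup j))
            = ∑ s, σ ⟨z1 t s, (hzmem t s).1⟩ * γ (Xup j) *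
                σ ⟨antipode (R := k) (z2 t s), hSL _ (hzmem t s).2⟩ :=
          fun t => hγ (antipode (R := k) (y2 t)) (hSL _ (hmem t).2) (nz t) (z1 t) (z2 t)
            (fun s => (hzmem t s).1) (fun s => (hzmem t s).2) (hzeq t) j
        ext v
        simp only [LinearMap.coe_sum, Finset.sum_apply, LinearMap.comp_apply]
        rw [Finset.sum_congr rfl fun t _ => by rw [hγt t]]
        simp only [LinearMap.sum_apply, Module.End.mul_apply, Finset.sum_apply,
          LinearMap.coe_sum, map_sum]
      _ = (σ ⟨antipode (R := k) Y, hSYmem⟩ : Sg →ₗ[k] Sg) ∘ₗ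
            ∑ i, (γ (Xup i) : Sg →ₗ[k] Sg) ∘ₗ A ∘ₗ (ρ (X i) : V →ₗ[k] V) := by
        ext v
        simp [Module.End.mul_apply]
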